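/- Let F be a complex-differentiable function on an open set containing the closed disk {z : |z − z₁| ≤ ρ₁}. Then for every n ≥ 1, the counterclockwise circle integral ∮_{|z−z₁|=ρ₁} conj(q₁,ₙ(z))·F′(z) dz equals 2πi·κ₂,ₙ₊₁·F′(z₁,ₙ). -/

import Mathlib

set_option maxHeartbeats 1000000 in
theorem conj_density_circle_integral
    (z₁ z₂ : ℂ) (hz : z₁ ≠ z₂) (ρ ρ₁ ρ₂ : ℝ)
    (hρ : ρ = ‖z₁ - z₂‖)
    (hρ₁ : 0 < ρ₁) (hρ₂ : 0 < ρ₂) (hsum : ρ₁ + ρ₂ < ρ)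
    (Λ₁ Λ₂ Λ : ℝ) (hΛ₁ : Λ₁ = (ρ₁ / ρ) ^ 2) (hΛ₂ : Λ₂ = (ρ₂ / ρ) ^ 2)
    (hΛ : Λ = (Λ₁ - Λ₂) ^ 2 + 1 - 2 * (Λ₁ + Λ₂))
    (l₁ l₂ : ℕ → ℝ) (hl₁0 : l₁ 0 = 1) (hl₂0 : l₂ 0 = 1)
    (hl₁ : ∀ n : ℕ, l₁ (n + 1) = 1 - Λ₂ / l₂ n)
    (hl₂ : ∀ n : ℕ, l₂ (n + 1) = 1 - Λ₁ / l₁ n)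
    (κ₁ κ₂ : ℕ → ℂ)
    (hκ₁1 : κ₁ 1 = ((2 * ρ₂ ^ 2 : ℝ) : ℂ))
    (hκ₁2 : κ₁ 2 = -(2 * (((ρ₁ * ρ₂ : ℝ)) : ℂ) ^ 2) / (starRingEnd ℂ (z₂ - z₁)) ^ 2)
    (hκ₁rec : ∀ n : ℕ, 1 ≤ n →
      κ₁ (n + 2) = ((Λ₁ * Λ₂ / (l₂ n * l₁ (n - 1)) ^ 2 : ℝ) : ℂ) * κ₁ n)
    (hκ₂1 : κ₂ 1 = ((2 * ρ₁ ^ 2 : ℝ) : ℂ))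
    (hκ₂2 : κ₂ 2 = -(2 * (((ρ₁ * ρ₂ : ℝ)) : ℂ) ^ 2) / (starRingEnd ℂ (z₁ - z₂)) ^ 2)
    (hκ₂rec : ∀ n : ℕ, 1 ≤ n →
      κ₂ (n + 2) = ((Λ₁ * Λ₂ / (l₁ n * l₂ (n - 1)) ^ 2 : ℝ) : ℂ) * κ₂ n)
    (z1s z2s : ℕ → ℂ)
    (hz1s : ∀ n : ℕ, z1s n = ((1 - l₂ n : ℝ) : ℂ) * z₂ + ((l₂ n : ℝ) : ℂ) * z₁)
    (hz2s : ∀ n : ℕ, z2s n = ((1 - l₁ n : ℝ) : ℂ) * z₁ + ((l₁ n : ℝ) : ℂ) * z₂)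
    (α₁ : ℕ → ℂ)
    (hα₁ : ∀ n : ℕ, 1 ≤ n →
      α₁ n = -κ₁ n / (2 * ((l₁ (n - 1) : ℝ) : ℂ) * (z₁ - z₂)))
    (q₁ : ℕ → ℂ → ℂ)
    (hq₁0 : ∀ z : ℂ, q₁ 0 z = 2 * (z - z₁))
    (hq₁ : ∀ n : ℕ, 1 ≤ n → ∀ z : ℂ, q₁ n z = κ₁ n / (z - z2s (n - 1)) + α₁ n)
    (F : ℂ → ℂ) (U : Set ℂ) (hU : IsOpen U)
    (hUb : Metric.closedBall z₁ ρ₁ ⊆ U) (hF : DifferentiableOn ℂ F U) :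
    ∀ n : ℕ, 1 ≤ n →
      (∮ z in C(z₁, ρ₁), starRingEnd ℂ (q₁ n z) * deriv F z) =
        2 * (Real.pi : ℂ) * Complex.I * κ₂ (n + 1) * deriv F (z1s n) := by
  have hρpos : 0 < ρ := by linarith
  have habc : ρ₁ / ρ + ρ₂ / ρ < 1 := by
    rw [← add_div, div_lt_one hρpos]; exact hsum
  have hA : 0 < ρ₁ / ρ := div_pos hρ₁ hρpos
  have hB : 0 < ρ₂ / ρ := div_pos hρ₂ hρpos
  have h1A : 0 < 1 - ρ₁ / ρ := by linarith
  have h1B : 0 < 1 - ρ₂ / ρ := by linarith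
  -- bounds on the sequences
  have hb : ∀ m : ℕ, 1 - ρ₂ / ρ ≤ l₁ m ∧ 1 - ρ₁ / ρ ≤ l₂ m := by
    intro m
    induction m with
    | zero => rw [hl₁0, hl₂0]; constructor <;> linarith
    | succ m ih =>
      have hp1 : 0 < l₁ m := lt_of_lt_of_le h1B ih.1
      have hp2 : 0 < l₂ m := lt_of_lt_of_le h1A ih.2
      constructor
      · rw [hl₁ m]
        have h : Λ₂ / l₂ m ≤ ρ₂ / ρ := by
          rw [div_le_iff₀ hp2, hΛ₂]
          nlinarith [mul_le_mul_of_nonneg_left ih.2 hB.le]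
        linarith
      · rw [hl₂ m]
        have h : Λ₁ / l₁ m ≤ ρ₁ / ρ := by
          rw [div_le_iff₀ hp1, hΛ₁]
          nlinarith [mul_le_mul_of_nonneg_left ih.1 hA.le]
        linarith
  have hl₁pos : ∀ m, 0 < l₁ m := fun m => lt_of_lt_of_le h1B (hb m).1
  have hl₂pos : ∀ m, 0 < l₂ m := fun m => lt_of_lt_of_le h1A (hb m).2
  set c : ℂ := (starRingEnd ℂ) (z₂ - z₁) with hcdef
  have hz21 : z₂ - z₁ ≠ 0 := sub_ne_zero.mpr (Ne.symm hz)
  have hz12 : z₁ - z₂ ≠ 0 := sub_ne_zero.mpr hz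
  have hcne : c ≠ 0 := by rw [hcdef]; simp only [ne_eq, map_eq_zero]; exact hz21
  have habs21 : ‖z₂ - z₁‖ = ρ := by
    rw [hρ]; exact norm_sub_rev _ _
  have hcc : c * (z₂ - z₁) = ((ρ : ℝ) : ℂ) ^ 2 := by
    rw [hcdef, mul_comm, Complex.mul_conj, Complex.normSq_eq_norm_sq, habs21]
    push_cast
    ring
  have hρℂ : ((ρ:ℝ):ℂ) ≠ 0 := by
    simpa using hρpos.ne'
  have hconj12 : (starRingEnd ℂ) (z₁ - z₂) = -c := by
    rw [show z₁ - z₂ = -(z₂ - z₁) by ring, map_neg, hcdef]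
  -- the coefficient identity
  have key2 : ∀ k : ℕ,
      κ₂ (k + 2) = -((starRingEnd ℂ) (κ₁ (k + 1))) * ((ρ₁ ^ 2 : ℝ) : ℂ) /
        (((l₁ k : ℝ) : ℂ) ^ 2 * c ^ 2) := by
    have lne : ∀ k : ℕ, ((l₁ k : ℝ) : ℂ) ≠ 0 := fun k => by
      simpa using (hl₁pos k).ne'
    have lne2 : ∀ k : ℕ, ((l₂ k : ℝ) : ℂ) ≠ 0 := fun k => by
      simpa using (hl₂pos k).ne'
    have base0 : κ₂ (0 + 2) = -((starRingEnd ℂ) (κ₁ (0 + 1))) * ((ρ₁ ^ 2 : ℝ) : ℂ) /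
        (((l₁ 0 : ℝ) : ℂ) ^ 2 * c ^ 2) := by
      rw [show (0:ℕ)+2 = 2 from rfl, show (0:ℕ)+1 = 1 from rfl, hκ₂2, hκ₁1, hl₁0,
        Complex.conj_ofReal, hconj12]
      push_cast
      field_simp
    have base1 : κ₂ (1 + 2) = -((starRingEnd ℂ) (κ₁ (1 + 1))) * ((ρ₁ ^ 2 : ℝ) : ℂ) /
        (((l₁ 1 : ℝ) : ℂ) ^ 2 * c ^ 2) := by
      have e : κ₂ (1 + 2) = ((Λ₁ * Λ₂ / (l₁ 1 * l₂ 0) ^ 2 : ℝ) : ℂ) * κ₂ 1 := by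
        simpa using hκ₂rec 1 le_rfl
      have hz21c : z₂ - z₁ = ((ρ : ℝ) : ℂ) ^ 2 / c := by
        rw [eq_div_iff hcne, mul_comm]; exact hcc
      have hκ₁2conj : (starRingEnd ℂ) (κ₁ 2) =
          -(2 * (((ρ₁ * ρ₂ : ℝ)) : ℂ) ^ 2) / (z₂ - z₁) ^ 2 := by
        rw [hκ₁2, map_div₀, map_neg, map_mul, map_pow, map_pow, Complex.conj_ofReal,
          hcdef, Complex.conj_conj, map_ofNat]
      rw [e, hκ₂1, hl₂0, show (1:ℕ)+1 = 2 from rfl, hκ₁2conj, hΛ₁, hΛ₂, hz21c]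
      push_cast
      field_simp
    have step : ∀ k : ℕ,
        κ₂ (k + 2) = -((starRingEnd ℂ) (κ₁ (k + 1))) * ((ρ₁ ^ 2 : ℝ) : ℂ) /
          (((l₁ k : ℝ) : ℂ) ^ 2 * c ^ 2) →
        κ₂ (k + 2 + 2) = -((starRingEnd ℂ) (κ₁ (k + 2 + 1))) * ((ρ₁ ^ 2 : ℝ) : ℂ) /
          (((l₁ (k + 2) : ℝ) : ℂ) ^ 2 * c ^ 2) := by
      intro k ih
      have e1 : κ₂ (k + 2 + 2) = ((Λ₁ * Λ₂ / (l₁ (k + 2) * l₂ (k + 1)) ^ 2 : ℝ) : ℂ) *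
          κ₂ (k + 2) := by
        simpa using hκ₂rec (k + 2) (by omega)
      have e2 : (starRingEnd ℂ) (κ₁ (k + 2 + 1)) =
          ((Λ₁ * Λ₂ / (l₂ (k + 1) * l₁ k) ^ 2 : ℝ) : ℂ) * (starRingEnd ℂ) (κ₁ (k + 1)) := by
        have h := hκ₁rec (k + 1) (by omega)
        simp only [Nat.add_sub_cancel] at h
        rw [show k + 2 + 1 = k + 1 + 2 by ring, h, map_mul, Complex.conj_ofReal]
      rw [e1, e2, ih]
      push_cast
      ring
    have H : ∀ k : ℕ,
        (κ₂ (k + 2) = -((starRingEnd ℂ) (κ₁ (k + 1))) * ((ρ₁ ^ 2 : ℝ) : ℂ) /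
          (((l₁ k : ℝ) : ℂ) ^ 2 * c ^ 2)) ∧
        (κ₂ (k + 1 + 2) = -((starRingEnd ℂ) (κ₁ (k + 1 + 1))) * ((ρ₁ ^ 2 : ℝ) : ℂ) /
          (((l₁ (k + 1) : ℝ) : ℂ) ^ 2 * c ^ 2)) := by
      intro k
      induction k with
      | zero => exact ⟨base0, base1⟩
      | succ k ih => exact ⟨ih.2, step k ih.1⟩
    exact fun k => (H k).1
  -- main part
  intro n hn
  obtain ⟨m, rfl⟩ : ∃ m, n = m + 1 := ⟨n - 1, (Nat.succ_pred_eq_of_pos hn).symm⟩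
  have hLpos : 0 < l₁ m := hl₁pos m
  have hLne : ((l₁ m : ℝ) : ℂ) ≠ 0 := by simpa using hLpos.ne'
  have hLa : ρ₁ / ρ < l₁ m := lt_of_lt_of_le (by linarith) (hb m).1
  set w : ℂ := z1s (m + 1) with hwdef
  have hw1 : w - z₁ = ((Λ₁ / l₁ m : ℝ) : ℂ) * (z₂ - z₁) := by
    rw [hwdef, hz1s (m + 1), hl₂ m]; push_cast; ring
  have hw2 : ((l₁ m : ℝ) : ℂ) * c * (w - z₁) = ((ρ₁ : ℝ) : ℂ) ^ 2 := by
    rw [hw1, hΛ₁]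
    push_cast
    field_simp
    linear_combination (ρ₁:ℂ)^2 * hcc
  have hwball : w ∈ Metric.ball z₁ ρ₁ := by
    rw [Metric.mem_ball, Complex.dist_eq, hw1, norm_mul, Complex.norm_real, Real.norm_eq_abs, habs21,
      abs_of_nonneg (by rw [hΛ₁]; positivity)]
    rw [hΛ₁, div_mul_eq_mul_div, div_lt_iff₀ hLpos]
    have h1 : (ρ₁ / ρ) ^ 2 * ρ = ρ₁ * (ρ₁ / ρ) := by field_simp
    rw [h1]
    exact mul_lt_mul_of_pos_left hLa hρ₁
  set cκ : ℂ := (starRingEnd ℂ) (κ₁ (m + 1)) with hcκdef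
  have hK : κ₂ (m + 1 + 1) = -cκ * (((l₁ m : ℝ) : ℂ) * c * (w - z₁)) /
      ((((l₁ m : ℝ) : ℂ)) ^ 2 * c ^ 2) := by
    have h := key2 m
    rw [Complex.ofReal_pow, ← hw2] at h
    exact h
  have hαc : (starRingEnd ℂ) (α₁ (m + 1)) = cκ / (2 * ((l₁ m : ℝ) : ℂ) * c) := by
    have h := hα₁ (m + 1) (by omega)
    simp only [Nat.add_sub_cancel] at h
    rw [h, map_div₀, map_neg, map_mul, map_mul, Complex.conj_ofReal, hconj12, map_ofNat,
      ← hcκdef]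
    rw [mul_neg, div_neg, neg_div, neg_neg]
  have hkey : ∀ z ∈ Metric.sphere z₁ ρ₁,
      starRingEnd ℂ (q₁ (m + 1) z) * deriv F z
        = (z - w)⁻¹ • (κ₂ (m + 1 + 1) * deriv F z
            + (-cκ / (2 * ((l₁ m : ℝ) : ℂ) * c)) * (z - w) * deriv F z) := by
    intro z hzs
    have habsz : ‖z - z₁‖ = ρ₁ := by
      rwa [Metric.mem_sphere, Complex.dist_eq] at hzs
    have hu : z - z₁ ≠ 0 := by
      intro h0
      rw [h0] at habsz
      simp only [norm_zero] at habsz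
      exact absurd habsz.symm hρ₁.ne'
    have hzw : z - w ≠ 0 := by
      intro h0
      have hzwe : z = w := sub_eq_zero.mp h0
      rw [Metric.mem_ball, Complex.dist_eq, ← hzwe, habsz] at hwball
      exact lt_irrefl _ hwball
    have hconjz : starRingEnd ℂ (z - z₁) * (z - z₁) = ((ρ₁ : ℝ) : ℂ) ^ 2 := by
      rw [mul_comm, Complex.mul_conj, Complex.normSq_eq_norm_sq, habsz]
      push_cast
      ring
    have hv : starRingEnd ℂ (z - z2s m) = starRingEnd ℂ (z - z₁) - ((l₁ m : ℝ) : ℂ) * c := by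
      rw [hz2s m, hcdef]
      simp only [map_sub, map_add, map_mul, Complex.conj_ofReal]
      push_cast
      ring
    have hq : q₁ (m + 1) z = κ₁ (m + 1) / (z - z2s m) + α₁ (m + 1) := by
      have h := hq₁ (m + 1) (by omega) z
      simp only [Nat.add_sub_cancel] at h
      exact h
    rw [hq, map_add, hαc, smul_eq_mul, hK]
    have hcu : starRingEnd ℂ (z - z₁) = ((ρ₁ : ℝ) : ℂ) ^ 2 / (z - z₁) := by
      rw [eq_div_iff hu]; exact hconjz
    have h6 : starRingEnd ℂ (z - z2s m) = (-((l₁ m : ℝ) : ℂ) * c) * (z - w) / (z - z₁) := by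
      rw [hv, hcu, ← hw2]
      field_simp
      ring
    rw [map_div₀, h6, div_div_eq_mul_div, ← hcκdef]
    have gen : ∀ X s t d : ℂ, X ≠ 0 → t ≠ 0 →
        (cκ * (t + s) / (-X * t) + cκ / (2 * X)) * d
          = t⁻¹ * ((-cκ * (X * s) / (X ^ 2)) * d + (-cκ / (2 * X)) * t * d) := by
      intro X s t d hX ht
      field_simp
      ring
    have hgen := gen (((l₁ m : ℝ) : ℂ) * c) (w - z₁) (z - w) (deriv F z)
      (mul_ne_zero hLne hcne) hzw
    linear_combination hgen
  have hdF : DifferentiableOn ℂ (deriv F) U := ((hF.analyticOnNhd hU).deriv).differentiableOn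
  have h5 : DifferentiableOn ℂ (deriv F) (Metric.closedBall z₁ ρ₁) := hdF.mono hUb
  have hgd : DifferentiableOn ℂ (fun z => κ₂ (m + 1 + 1) * deriv F z
      + (-cκ / (2 * ((l₁ m : ℝ) : ℂ) * c)) * (z - w) * deriv F z)
      (Metric.closedBall z₁ ρ₁) :=
    (h5.const_mul _).add
      (((differentiableOn_id.sub (differentiableOn_const w)).const_mul _).mul h5)
  have hg : DiffContOnCl ℂ (fun z => κ₂ (m + 1 + 1) * deriv F z
      + (-cκ / (2 * ((l₁ m : ℝ) : ℂ) * c)) * (z - w) * deriv F z) (Metric.ball z₁ ρ₁) := by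
    apply DifferentiableOn.diffContOnCl
    rwa [closure_ball z₁ hρ₁.ne']
  have hI := hg.circleIntegral_sub_inv_smul hwball
  rw [circleIntegral.integral_congr hρ₁.le (fun z hzz => hkey z hzz), hI]
  simp only [sub_self, mul_zero, zero_mul, add_zero, smul_eq_mul]
  ring
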